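/- Let d ≥ 4. Let 𝕊_d be the space of symmetric real d×d matrices with all diagonal entries zero. Let 𝕊_{d,1} = ℝ·(J_d − I_d) where J_d is the all-ones matrix; let 𝕊_{d,2} be the set of A ∈ 𝕊_d for which there exists x ∈ ℝᵈ with Σᵢ xᵢ = 0 such that A_{ij} = x_i + x_j for all i ≠ j; and let 𝕊_{d,3} be the set of A ∈ 𝕊_d all of whose row sums are zero. Then 𝕊_d = 𝕊_{d,1} ⊕ 𝕊_{d,2} ⊕ 𝕊_{d,3}; the three summands are pairwise orthogonal with respect to the Frobenius inner product; each is invariant under the diagonal S_d-action W ↦ P_σ W P_σᵀ; and dim 𝕊_{d,1} = 1, dim 𝕊_{d,2} = d − 1, dim 𝕊_{d,3} = d(d−3)/2. -/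

import Mathlib

open Matrix

/-- The permutation matrix of `σ`. -/
def permMat {d : ℕ} (σ : Equiv.Perm (Fin d)) : Matrix (Fin d) (Fin d) ℝ :=
  Matrix.of fun i j => if σ j = i then (1 : ℝ) else 0

/-- The all-ones matrix. -/
def Jmat (d : ℕ) : Matrix (Fin d) (Fin d) ℝ := Matrix.of fun _ _ => (1 : ℝ)

/-- `𝕊_d`: symmetric matrices with zero diagonal. -/
def Ssym (d : ℕ) : Submodule ℝ (Matrix (Fin d) (Fin d) ℝ) where
  carrier := {A | Aᵀ = A ∧ ∀ i, A i i = 0}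
  zero_mem' := ⟨by simp, fun i => rfl⟩
  add_mem' := by
    rintro a b ⟨ha1, ha2⟩ ⟨hb1, hb2⟩
    exact ⟨by rw [Matrix.transpose_add, ha1, hb1],
      fun i => by simp [Matrix.add_apply, ha2 i, hb2 i]⟩
  smul_mem' := by
    rintro c a ⟨ha1, ha2⟩
    exact ⟨by rw [Matrix.transpose_smul, ha1],
      fun i => by simp [Matrix.smul_apply, ha2 i]⟩

/-- `𝕊_{d,1} = ℝ·(J − I)`. -/
def Sd1 (d : ℕ) : Submodule ℝ (Matrix (Fin d) (Fin d) ℝ) :=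
  Submodule.span ℝ {Jmat d - 1}

/-- `𝕊_{d,2}`: symmetric, zero diagonal, off-diagonal entries `x i + x j`, `∑ x = 0`. -/
def Sd2 (d : ℕ) : Submodule ℝ (Matrix (Fin d) (Fin d) ℝ) where
  carrier := {A | ∃ x : Fin d → ℝ, (∑ i, x i = 0) ∧ (∀ i, A i i = 0) ∧
    ∀ i j, i ≠ j → A i j = x i + x j}
  zero_mem' := ⟨0, by simp, fun i => rfl, fun i j _ => by simp⟩
  add_mem' := by
    rintro a b ⟨x, hx0, hxd, hx⟩ ⟨y, hy0, hyd, hy⟩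
    refine ⟨x + y, by simp [Finset.sum_add_distrib, hx0, hy0], fun i => ?_,
      fun i j hij => ?_⟩
    · simp [Matrix.add_apply, hxd i, hyd i]
    · simp [Matrix.add_apply, hx i j hij, hy i j hij]; ring
  smul_mem' := by
    rintro c a ⟨x, hx0, hxd, hx⟩
    refine ⟨c • x, by simp [← Finset.mul_sum, hx0], fun i => ?_, fun i j hij => ?_⟩
    · simp [Matrix.smul_apply, hxd i]
    · simp [Matrix.smul_apply, hx i j hij]; ring

/-- `𝕊_{d,3}`: symmetric, zero diagonal, all row sums zero. -/
def Sd3 (d : ℕ) : Submodule ℝ (Matrix (Fin d) (Fin d) ℝ) where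
  carrier := {A | Aᵀ = A ∧ (∀ i, A i i = 0) ∧ ∀ i, ∑ j, A i j = 0}
  zero_mem' := ⟨by simp, fun i => rfl, by simp⟩
  add_mem' := by
    rintro a b ⟨ha1, ha2, ha3⟩ ⟨hb1, hb2, hb3⟩
    refine ⟨by rw [Matrix.transpose_add, ha1, hb1], fun i => ?_, fun i => ?_⟩
    · simp [Matrix.add_apply, ha2 i, hb2 i]
    · simp [Matrix.add_apply, Finset.sum_add_distrib, ha3 i, hb3 i]
  smul_mem' := by
    rintro c a ⟨ha1, ha2, ha3⟩
    refine ⟨by rw [Matrix.transpose_smul, ha1], fun i => ?_, fun i => ?_⟩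
    · simp [Matrix.smul_apply, ha2 i]
    · simp [Matrix.smul_apply, ← Finset.mul_sum, ha3 i]

/-! ### Auxiliary lemmas -/

section Aux
open Finset

lemma conj_apply {d : ℕ} (σ : Equiv.Perm (Fin d)) (A : Matrix (Fin d) (Fin d) ℝ)
    (i j : Fin d) : (permMat σ * A * (permMat σ)ᵀ) i j = A (σ⁻¹ i) (σ⁻¹ j) := by
  have h1 : ∀ k, (permMat σ * A) i k = A (σ⁻¹ i) k := by
    intro k
    rw [Matrix.mul_apply, Finset.sum_eq_single (σ⁻¹ i)]
    · simp [permMat]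
    · intro b _ hb
      have : σ b ≠ i := fun h => hb (by simp [← h])
      simp [permMat, this]
    · simp
  rw [Matrix.mul_apply, Finset.sum_eq_single (σ⁻¹ j)]
  · rw [h1]; simp [permMat]
  · intro b _ hb
    have : σ b ≠ j := fun h => hb (by simp [← h])
    simp [permMat, this]
  · simp

lemma frob {d : ℕ} (A B : Matrix (Fin d) (Fin d) ℝ) :
    Matrix.trace (Aᵀ * B) = ∑ i, ∑ j, A i j * B i j := by
  simp only [Matrix.trace, Matrix.diag, Matrix.mul_apply, Matrix.transpose_apply]
  rw [Finset.sum_comm]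

lemma self_orth {d : ℕ} (A : Matrix (Fin d) (Fin d) ℝ)
    (h : Matrix.trace (Aᵀ * A) = 0) : A = 0 := by
  rw [frob] at h
  have h' := (Finset.sum_eq_zero_iff_of_nonneg
    (fun i _ => Finset.sum_nonneg fun j _ => mul_self_nonneg (A i j))).mp h
  ext i j
  have := (Finset.sum_eq_zero_iff_of_nonneg
    (fun j _ => mul_self_nonneg (A i j))).mp (h' i (Finset.mem_univ i)) j (Finset.mem_univ j)
  simpa using mul_self_eq_zero.mp this

lemma row_sum_eq {d : ℕ} (hd : 4 ≤ d) (x : Fin d → ℝ) (A : Matrix (Fin d) (Fin d) ℝ)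
    (i : Fin d) (hAi : A i i = 0) (hoff : ∀ j, j ≠ i → A i j = x i + x j) :
    ∑ j, A i j = ((d : ℝ) - 2) * x i + ∑ j, x j := by
  rw [← Finset.sum_erase_add _ _ (Finset.mem_univ i), hAi, add_zero]
  rw [Finset.sum_congr rfl (fun j hj => hoff j (Finset.ne_of_mem_erase hj))]
  rw [Finset.sum_add_distrib, Finset.sum_const, Finset.card_erase_of_mem (Finset.mem_univ i),
    Finset.card_univ, Fintype.card_fin, Finset.sum_erase_eq_sub (Finset.mem_univ i)]
  have h1 : ((d - 1 : ℕ) : ℝ) = (d : ℝ) - 1 := by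
    have : (1:ℕ) ≤ d := by omega
    push_cast [this]; ring
  rw [nsmul_eq_mul, h1]; ring

/-- linear map realizing `Sd2`. -/
def Lmap (d : ℕ) : (Fin d → ℝ) →ₗ[ℝ] Matrix (Fin d) (Fin d) ℝ where
  toFun x := Matrix.of fun i j => if i = j then 0 else x i + x j
  map_add' x y := by
    ext i j; simp only [Matrix.of_apply, Matrix.add_apply, Pi.add_apply]
    split_ifs <;> ring
  map_smul' c x := by
    ext i j; simp only [Matrix.of_apply, Matrix.smul_apply, Pi.smul_apply, RingHom.id_apply,
      smul_eq_mul]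
    split_ifs <;> ring

lemma Lmap_inj (d : ℕ) (hd : 4 ≤ d) : Function.Injective (Lmap d) := by
  rw [injective_iff_map_eq_zero]
  intro x hx
  have h : ∀ i j : Fin d, i ≠ j → x i + x j = 0 := by
    intro i j hij
    have := congrFun (congrFun hx i) j
    simpa [Lmap, hij] using this
  have h0 : (⟨0, by omega⟩ : Fin d) ≠ ⟨1, by omega⟩ := by simp
  have h1 : (⟨0, by omega⟩ : Fin d) ≠ ⟨2, by omega⟩ := by simp
  have h2 : (⟨1, by omega⟩ : Fin d) ≠ ⟨2, by omega⟩ := by simp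
  have e0 := h _ _ h0
  have e1 := h _ _ h1
  have e2 := h _ _ h2
  funext j
  by_cases hj : j = ⟨0, by omega⟩
  · subst hj; simp only [Pi.zero_apply]; linarith
  · have := h j _ hj
    simp only [Pi.zero_apply]; linarith

/-- the sum functional -/
def sumFun (d : ℕ) : (Fin d → ℝ) →ₗ[ℝ] ℝ where
  toFun x := ∑ i, x i
  map_add' x y := by simp [Finset.sum_add_distrib]
  map_smul' c x := by simp [Finset.mul_sum]

lemma sumFun_surj (d : ℕ) (hd : 4 ≤ d) : Function.Surjective (sumFun d) := by
  intro c
  refine ⟨fun i => if i = ⟨0, by omega⟩ then c else 0, ?_⟩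
  simp [sumFun]

lemma finrank_ker_sumFun (d : ℕ) (hd : 4 ≤ d) :
    Module.finrank ℝ (LinearMap.ker (sumFun d)) = d - 1 := by
  have h := LinearMap.finrank_range_add_finrank_ker (sumFun d)
  rw [LinearMap.range_eq_top.mpr (sumFun_surj d hd)] at h
  simp only [finrank_top] at h
  have h1 : Module.finrank ℝ ℝ = 1 := Module.finrank_self ℝ
  rw [h1] at h
  have hdom : Module.finrank ℝ (Fin d → ℝ) = d := by simp
  omega

lemma Sd2_eq_map (d : ℕ) :
    Sd2 d = Submodule.map (Lmap d) (LinearMap.ker (sumFun d)) := by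
  apply le_antisymm
  · rintro A ⟨x, hx0, hxd, hx⟩
    refine ⟨x, by simpa [sumFun, LinearMap.mem_ker] using hx0, ?_⟩
    ext i j
    simp only [Lmap, LinearMap.coe_mk, AddHom.coe_mk, Matrix.of_apply]
    split_ifs with h
    · subst h; exact (hxd i).symm
    · exact (hx i j h).symm
  · rintro _ ⟨x, hx, rfl⟩
    exact ⟨x, by simpa [sumFun, LinearMap.mem_ker] using hx,
      fun i => by simp [Lmap], fun i j hij => by simp [Lmap, hij]⟩

lemma finrank_Sd2 (d : ℕ) (hd : 4 ≤ d) : Module.finrank ℝ (Sd2 d) = d - 1 := by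
  rw [Sd2_eq_map d]
  rw [← LinearEquiv.finrank_eq
    (Submodule.equivMapOfInjective (Lmap d) (Lmap_inj d hd) (LinearMap.ker (sumFun d)))]
  exact finrank_ker_sumFun d hd

lemma Jmat_sub_one_ne (d : ℕ) (hd : 4 ≤ d) : Jmat d - 1 ≠ 0 := by
  intro h
  have := congrFun (congrFun h ⟨0, by omega⟩) ⟨1, by omega⟩
  simp [Jmat, Matrix.sub_apply, Matrix.one_apply, Fin.ext_iff] at this

lemma finrank_Sd1 (d : ℕ) (hd : 4 ≤ d) : Module.finrank ℝ (Sd1 d) = 1 :=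
  finrank_span_singleton (Jmat_sub_one_ne d hd)

/-- index type for off-diagonal upper entries -/
def Mmap (d : ℕ) : ((Σ j : Fin d, Fin j.1) → ℝ) →ₗ[ℝ] Matrix (Fin d) (Fin d) ℝ where
  toFun f := Matrix.of fun i j =>
    if h : (i:ℕ) < (j:ℕ) then f ⟨j, ⟨i, h⟩⟩
    else if h : (j:ℕ) < (i:ℕ) then f ⟨i, ⟨j, h⟩⟩ else 0
  map_add' f g := by
    ext i j; simp only [Matrix.of_apply, Matrix.add_apply, Pi.add_apply]
    split_ifs <;> simp
  map_smul' c f := by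
    ext i j; simp only [Matrix.of_apply, Matrix.smul_apply, Pi.smul_apply, RingHom.id_apply,
      smul_eq_mul]
    split_ifs <;> simp

lemma Mmap_inj (d : ℕ) : Function.Injective (Mmap d) := by
  rw [injective_iff_map_eq_zero]
  intro f hf
  funext p
  obtain ⟨j, i⟩ := p
  have hlt : ((⟨i.1, i.2.trans j.2⟩ : Fin d) : ℕ) < (j : ℕ) := i.2
  have := congrFun (congrFun hf ⟨i.1, i.2.trans j.2⟩) j
  simp only [Mmap, LinearMap.coe_mk, AddHom.coe_mk, Matrix.of_apply, Matrix.zero_apply,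
    dif_pos hlt] at this
  simpa using this

lemma Mmap_range (d : ℕ) : LinearMap.range (Mmap d) = Ssym d := by
  apply le_antisymm
  · rintro _ ⟨f, rfl⟩
    constructor
    · ext i j
      simp only [Matrix.transpose_apply, Mmap, LinearMap.coe_mk, AddHom.coe_mk, Matrix.of_apply]
      rcases lt_trichotomy (i:ℕ) (j:ℕ) with h | h | h
      · rw [dif_neg (by omega), dif_pos h, dif_pos h]
      · rw [dif_neg (by omega), dif_neg (by omega), dif_neg (by omega), dif_neg (by omega)]
      · rw [dif_pos h, dif_neg (by omega), dif_pos h]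
    · intro i
      simp only [Mmap, LinearMap.coe_mk, AddHom.coe_mk, Matrix.of_apply]
      rw [dif_neg (by omega), dif_neg (by omega)]
  · rintro A ⟨hA1, hA2⟩
    refine ⟨fun p => A ⟨p.2.1, p.2.2.trans p.1.2⟩ p.1, ?_⟩
    ext i j
    simp only [Mmap, LinearMap.coe_mk, AddHom.coe_mk, Matrix.of_apply]
    rcases lt_trichotomy (i:ℕ) (j:ℕ) with h | h | h
    · rw [dif_pos h]
    · have : i = j := Fin.ext h
      subst this
      rw [dif_neg (by omega), dif_neg (by omega)]
      exact (hA2 i).symm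
    · rw [dif_neg (by omega), dif_pos h]
      have := congrFun (congrFun hA1 ⟨j.1, j.2⟩) i
      simpa [Matrix.transpose_apply] using this.symm

lemma finrank_Ssym (d : ℕ) : Module.finrank ℝ (Ssym d) = d * (d - 1) / 2 := by
  rw [← Mmap_range d, LinearMap.finrank_range_of_inj (Mmap_inj d)]
  rw [Module.finrank_fintype_fun_eq_card]
  rw [Fintype.card_sigma]
  simp only [Fintype.card_fin]
  rw [Fin.sum_univ_eq_sum_range (fun i => i) d]
  exact Finset.sum_range_id d

end Aux

section Aux2
open Finset

lemma orth12 {d : ℕ} (hd : 4 ≤ d) : ∀ A ∈ Sd1 d, ∀ B ∈ Sd2 d,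
    Matrix.trace (Aᵀ * B) = 0 := by
  intro A hA B hB
  obtain ⟨c, rfl⟩ := Submodule.mem_span_singleton.mp hA
  obtain ⟨x, hx0, hxd, hx⟩ := hB
  rw [frob]
  have key : ∀ i, ∑ j, (c • (Jmat d - 1)) i j * B i j
      = c * (((d:ℝ) - 2) * x i + ∑ j, x j) := by
    intro i
    have hrow := row_sum_eq hd x B i (hxd i) (fun j hj => hx i j (Ne.symm hj))
    rw [← hrow, Finset.mul_sum]
    apply Finset.sum_congr rfl
    intro j _
    by_cases h : i = j
    · subst h; simp [hxd i]
    · simp [Jmat, Matrix.smul_apply, Matrix.sub_apply, Matrix.one_apply, h]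
  rw [Finset.sum_congr rfl (fun i _ => key i), ← Finset.mul_sum]
  have hz : ∑ i : Fin d, (((d:ℝ) - 2) * x i + ∑ j, x j) = 0 := by
    rw [Finset.sum_add_distrib, ← Finset.mul_sum, hx0]
    simp [hx0]
  rw [hz, mul_zero]

lemma orth13 {d : ℕ} (hd : 4 ≤ d) : ∀ A ∈ Sd1 d, ∀ B ∈ Sd3 d,
    Matrix.trace (Aᵀ * B) = 0 := by
  intro A hA B hB
  obtain ⟨c, rfl⟩ := Submodule.mem_span_singleton.mp hA
  obtain ⟨hB1, hB2, hB3⟩ := hB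
  rw [frob]
  have key : ∀ i, ∑ j, (c • (Jmat d - 1)) i j * B i j = 0 := by
    intro i
    have : ∑ j, (c • (Jmat d - 1)) i j * B i j = c * ∑ j, B i j := by
      rw [Finset.mul_sum]
      apply Finset.sum_congr rfl
      intro j _
      by_cases h : i = j
      · subst h; simp [hB2 i]
      · simp [Jmat, Matrix.smul_apply, Matrix.sub_apply, Matrix.one_apply, h]
    rw [this, hB3 i, mul_zero]
  rw [Finset.sum_congr rfl (fun i _ => key i), Finset.sum_const, smul_zero]

lemma orth23 {d : ℕ} (hd : 4 ≤ d) : ∀ A ∈ Sd2 d, ∀ B ∈ Sd3 d,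
    Matrix.trace (Aᵀ * B) = 0 := by
  intro A hA B hB
  obtain ⟨x, hx0, hxd, hx⟩ := hA
  obtain ⟨hB1, hB2, hB3⟩ := hB
  have hsym : ∀ a b, B a b = B b a := fun a b => congrFun (congrFun hB1 b) a
  rw [frob]
  have key : ∀ i j, A i j * B i j = x i * B i j + x j * B i j := by
    intro i j
    by_cases h : i = j
    · subst h; rw [hB2 i]; ring
    · rw [hx i j h]; ring
  calc ∑ i, ∑ j, A i j * B i j
      = ∑ i, ∑ j, (x i * B i j + x j * B i j) := by
        exact Finset.sum_congr rfl fun i _ => Finset.sum_congr rfl fun j _ => key i j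
    _ = (∑ i, ∑ j, x i * B i j) + ∑ i, ∑ j, x j * B i j := by
        rw [← Finset.sum_add_distrib]
        exact Finset.sum_congr rfl fun i _ => Finset.sum_add_distrib
    _ = 0 := by
        have e1 : ∀ i : Fin d, ∑ j, x i * B i j = 0 := by
          intro i; rw [← Finset.mul_sum, hB3 i, mul_zero]
        have e2 : ∀ j : Fin d, ∑ i, x j * B i j = 0 := by
          intro j
          rw [← Finset.mul_sum]
          have : ∑ i, B i j = 0 := by
            rw [Finset.sum_congr rfl fun i _ => hsym i j]
            exact hB3 j
          rw [this, mul_zero]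
        rw [Finset.sum_congr rfl fun i _ => e1 i, Finset.sum_comm,
          Finset.sum_congr rfl fun j _ => e2 j]
        simp

lemma inv1 {d : ℕ} : ∀ σ : Equiv.Perm (Fin d), ∀ A ∈ Sd1 d,
    permMat σ * A * (permMat σ)ᵀ ∈ Sd1 d := by
  intro σ A hA
  obtain ⟨c, rfl⟩ := Submodule.mem_span_singleton.mp hA
  apply Submodule.mem_span_singleton.mpr
  refine ⟨c, ?_⟩
  ext i j
  rw [conj_apply]
  by_cases h : i = j
  · subst h; simp [Jmat, Matrix.smul_apply, Matrix.sub_apply, Matrix.one_apply]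
  · have h' : σ⁻¹ i ≠ σ⁻¹ j := fun hh => h (σ⁻¹.injective hh)
    simp [Jmat, Matrix.smul_apply, Matrix.sub_apply, Matrix.one_apply, h, h']

lemma inv2 {d : ℕ} : ∀ σ : Equiv.Perm (Fin d), ∀ A ∈ Sd2 d,
    permMat σ * A * (permMat σ)ᵀ ∈ Sd2 d := by
  rintro σ A ⟨x, hx0, hxd, hx⟩
  refine ⟨fun i => x (σ⁻¹ i), (Equiv.sum_comp σ⁻¹ x).trans hx0,
    fun i => by rw [conj_apply]; exact hxd _, fun i j hij => by
      rw [conj_apply]; exact hx _ _ fun h => hij (σ⁻¹.injective h)⟩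

lemma inv3 {d : ℕ} : ∀ σ : Equiv.Perm (Fin d), ∀ A ∈ Sd3 d,
    permMat σ * A * (permMat σ)ᵀ ∈ Sd3 d := by
  rintro σ A ⟨hA1, hA2, hA3⟩
  have hsym : ∀ a b, A a b = A b a := fun a b => congrFun (congrFun hA1 b) a
  refine ⟨?_, fun i => by rw [conj_apply]; exact hA2 _, fun i => ?_⟩
  · ext i j
    rw [Matrix.transpose_apply, conj_apply, conj_apply]
    exact hsym _ _
  · rw [Finset.sum_congr rfl fun j _ => conj_apply σ A i j]
    rw [Equiv.sum_comp σ⁻¹ (fun j => A (σ⁻¹ i) j)]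
    exact hA3 _

lemma sup_eq_Ssym {d : ℕ} (hd : 4 ≤ d) : Sd1 d ⊔ Sd2 d ⊔ Sd3 d = Ssym d := by
  apply le_antisymm
  · refine sup_le (sup_le ?_ ?_) ?_
    · rw [Sd1, Submodule.span_le, Set.singleton_subset_iff]
      constructor
      · ext i j
        simp [Jmat, Matrix.sub_apply, Matrix.one_apply, eq_comm]
      · intro i; simp [Jmat, Matrix.sub_apply, Matrix.one_apply]
    · rintro A ⟨x, hx0, hxd, hx⟩
      constructor
      · ext i j
        by_cases h : i = j
        · subst h; rfl
        · rw [Matrix.transpose_apply, hx i j h, hx j i (Ne.symm h)]; ring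
      · exact hxd
    · rintro A ⟨hA1, hA2, hA3⟩
      exact ⟨hA1, hA2⟩
  · rintro A ⟨hA1, hA2⟩
    have hd2 : ((d:ℝ) - 2) ≠ 0 := by
      have : (4:ℝ) ≤ (d:ℝ) := by exact_mod_cast hd
      linarith
    have hdd : (d:ℝ) * ((d:ℝ) - 1) ≠ 0 := by
      have : (4:ℝ) ≤ (d:ℝ) := by exact_mod_cast hd
      exact mul_ne_zero (by linarith) (by linarith)
    set s : Fin d → ℝ := fun i => ∑ j, A i j with hs
    set S : ℝ := ∑ i, s i with hS
    set c : ℝ := S / ((d:ℝ) * ((d:ℝ) - 1)) with hc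
    set x : Fin d → ℝ := fun i => (s i - c * ((d:ℝ) - 1)) / ((d:ℝ) - 2) with hxdef
    have hsum_x : ∑ i, x i = 0 := by
      rw [hxdef]
      simp only
      rw [← Finset.sum_div, Finset.sum_sub_distrib, Finset.sum_const, Finset.card_univ,
        Fintype.card_fin, nsmul_eq_mul, ← hS]
      have : S - (d:ℝ) * (c * ((d:ℝ) - 1)) = 0 := by
        rw [hc, div_mul_eq_mul_div, mul_div_assoc', mul_left_comm, mul_div_assoc, div_self hdd,
          mul_one, sub_self]
      rw [this, zero_div]
    set A1 : Matrix (Fin d) (Fin d) ℝ := c • (Jmat d - 1) with hA1def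
    set A2 : Matrix (Fin d) (Fin d) ℝ := Lmap d x with hA2def
    set A3 : Matrix (Fin d) (Fin d) ℝ := A - A1 - A2 with hA3def
    have hm1 : A1 ∈ Sd1 d := Submodule.smul_mem _ c (Submodule.mem_span_singleton_self _)
    have hm2 : A2 ∈ Sd2 d :=
      ⟨x, hsum_x, fun i => by simp [hA2def, Lmap], fun i j hij => by simp [hA2def, Lmap, hij]⟩
    have hrow1 : ∀ i, ∑ j, A1 i j = c * ((d:ℝ) - 1) := by
      intro i
      rw [hA1def]
      have hentry : ∀ j, (c • (Jmat d - 1)) i j = c * (1 - if i = j then 1 else 0) := by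
        intro j; simp [Jmat, Matrix.smul_apply, Matrix.sub_apply, Matrix.one_apply]
      rw [Finset.sum_congr rfl fun j _ => hentry j, ← Finset.mul_sum]
      congr 1
      rw [Finset.sum_sub_distrib, Finset.sum_const, Finset.card_univ, Fintype.card_fin]
      simp
    have hrow2 : ∀ i, ∑ j, A2 i j = ((d:ℝ) - 2) * x i := by
      intro i
      have := row_sum_eq hd x A2 i (by simp [hA2def, Lmap])
        (fun j hj => by simp [hA2def, Lmap, (Ne.symm hj : i ≠ j)])
      rw [this, hsum_x, add_zero]
    have hA1T : A1ᵀ = A1 := by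
      ext i j
      by_cases h : i = j
      · subst h; rfl
      · simp [hA1def, Jmat, Matrix.transpose_apply, Matrix.smul_apply, Matrix.sub_apply,
          Matrix.one_apply, h, Ne.symm h]
    have hA2T : A2ᵀ = A2 := by
      ext i j
      by_cases h : i = j
      · subst h; rfl
      · simp [hA2def, Lmap, h, Ne.symm h, Matrix.transpose_apply]
        ring
    have hm3 : A3 ∈ Sd3 d := by
      refine ⟨?_, fun i => ?_, fun i => ?_⟩
      · rw [hA3def, Matrix.transpose_sub, Matrix.transpose_sub, hA1, hA1T, hA2T]
      · rw [hA3def]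
        simp only [Matrix.sub_apply]
        rw [hA2 i]
        have e1 : A1 i i = 0 := by simp [hA1def, Jmat, Matrix.smul_apply, Matrix.sub_apply,
          Matrix.one_apply]
        have e2 : A2 i i = 0 := by simp [hA2def, Lmap]
        rw [e1, e2]; ring
      · rw [hA3def]
        simp only [Matrix.sub_apply]
        rw [Finset.sum_sub_distrib, Finset.sum_sub_distrib, hrow1 i, hrow2 i]
        have hsi : s i = ∑ j, A i j := rfl
        have hx2 : ((d:ℝ) - 2) * x i = s i - c * ((d:ℝ) - 1) := by
          rw [hxdef]
          simp only
          field_simp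
        rw [← hsi, hx2]
        ring
    have hsum : A = A1 + A2 + A3 := by rw [hA3def]; abel
    rw [hsum]
    exact Submodule.add_mem _
      (Submodule.add_mem _ (Submodule.mem_sup_left (Submodule.mem_sup_left hm1))
        (Submodule.mem_sup_left (Submodule.mem_sup_right hm2)))
      (Submodule.mem_sup_right hm3)

end Aux2

section Aux3
open Finset

lemma inf12_bot (d : ℕ) (hd : 4 ≤ d) : Sd1 d ⊓ Sd2 d = ⊥ := by
  rw [eq_bot_iff]
  rintro A ⟨h1, h2⟩
  exact (Submodule.mem_bot ℝ).mpr (self_orth A (orth12 hd A h1 A h2))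

lemma infsup3_bot (d : ℕ) (hd : 4 ≤ d) : (Sd1 d ⊔ Sd2 d) ⊓ Sd3 d = ⊥ := by
  rw [eq_bot_iff]
  rintro A ⟨hsup, h3⟩
  obtain ⟨a, ha, b, hb, rfl⟩ := Submodule.mem_sup.mp hsup
  refine (Submodule.mem_bot ℝ).mpr (self_orth _ ?_)
  have hsplit : (a + b)ᵀ * (a + b) = aᵀ * (a + b) + bᵀ * (a + b) := by
    rw [Matrix.transpose_add, Matrix.add_mul]
  rw [hsplit, Matrix.trace_add, orth13 hd a ha _ h3, orth23 hd b hb _ h3, add_zero]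

lemma finrank_Sd3 (d : ℕ) (hd : 4 ≤ d) :
    Module.finrank ℝ (Sd3 d) = d * (d - 3) / 2 := by
  have h12 := Submodule.finrank_sup_add_finrank_inf_eq (Sd1 d) (Sd2 d)
  rw [inf12_bot d hd, finrank_bot, finrank_Sd1 d hd, finrank_Sd2 d hd] at h12
  have htot := Submodule.finrank_sup_add_finrank_inf_eq (Sd1 d ⊔ Sd2 d) (Sd3 d)
  rw [infsup3_bot d hd, finrank_bot, sup_eq_Ssym hd, finrank_Ssym d] at htot
  have heven : 2 ∣ d * (d - 3) := by
    rcases Nat.even_or_odd d with h | h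
    · exact Dvd.dvd.mul_right h.two_dvd _
    · have he : Even (d - 3) := by
        rcases h with ⟨k, hk⟩; exact ⟨k - 1, by omega⟩
      exact Dvd.dvd.mul_left he.two_dvd _
  obtain ⟨m, hm⟩ := heven
  have h1 : d * (d - 1) = d * (d - 3) + 2 * d := by
    have h3 : 3 ≤ d := by omega
    have h1' : 1 ≤ d := by omega
    zify [h3, h1']
    ring
  have ha : d * (d - 1) / 2 = m + d := by rw [h1, hm]; omega
  have hb : d * (d - 3) / 2 = m := by rw [hm]; omega
  rw [ha] at htot
  rw [hb]
  omega

end Aux3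

/-- for `d ≥ 4`, the space `𝕊_d` of symmetric matrices with zero diagonal
is the orthogonal (Frobenius) direct sum of the `S_d`-invariant subspaces `𝕊_{d,1}`,
`𝕊_{d,2}`, `𝕊_{d,3}`, of dimensions `1`, `d − 1` and `d(d−3)/2` respectively. -/
theorem symmetric_zero_diag_decomposition (d : ℕ) (hd : 4 ≤ d) :
    Sd1 d ⊔ Sd2 d ⊔ Sd3 d = Ssym d ∧
    (∀ A ∈ Sd1 d, ∀ B ∈ Sd2 d, Matrix.trace (Aᵀ * B) = 0) ∧
    (∀ A ∈ Sd1 d, ∀ B ∈ Sd3 d, Matrix.trace (Aᵀ * B) = 0) ∧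
    (∀ A ∈ Sd2 d, ∀ B ∈ Sd3 d, Matrix.trace (Aᵀ * B) = 0) ∧
    (∀ σ : Equiv.Perm (Fin d), ∀ A ∈ Sd1 d, permMat σ * A * (permMat σ)ᵀ ∈ Sd1 d) ∧
    (∀ σ : Equiv.Perm (Fin d), ∀ A ∈ Sd2 d, permMat σ * A * (permMat σ)ᵀ ∈ Sd2 d) ∧
    (∀ σ : Equiv.Perm (Fin d), ∀ A ∈ Sd3 d, permMat σ * A * (permMat σ)ᵀ ∈ Sd3 d) ∧
    Module.finrank ℝ (Sd1 d) = 1 ∧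
    Module.finrank ℝ (Sd2 d) = d - 1 ∧
    Module.finrank ℝ (Sd3 d) = d * (d - 3) / 2 := by
  exact ⟨sup_eq_Ssym hd, orth12 hd, orth13 hd, orth23 hd, inv1, inv2, inv3,
    finrank_Sd1 d hd, finrank_Sd2 d hd, finrank_Sd3 d hd⟩
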